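/- Let g ∈ ℝ, let u = (1, 0) and v = (cos g, sin g) in ℝ², and let R₋g denote the rotation of ℝ² about the origin by angle −g. Then for all real numbers p and q, R₋g(p·u + q·v) = (q + 2p·cos g)·u − p·v. Moreover, setting p₂ = q + 2p·cos g and q₂ = −p, one has p·q₂ − p₂·q = −(p² + q² + 2pq·cos g) = −‖p·u + q·v‖². -/

import Mathlib

/-- Let `g ∈ ℝ`, `u = (1, 0)`, `v = (cos g, sin g)` in `ℝ²`, and let `R` be the
rotation about the origin by the angle `−g` (given componentwise by the matrix with
rows `(cos g, sin g)` and `(−sin g, cos g)`).  Then for all reals `p, q`: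
`R(p·u + q·v) = (q + 2p·cos g)·u − p·v`, and with `p₂ = q + 2p·cos g`, `q₂ = −p`
one has `p·q₂ − p₂·q = −(p² + q² + 2pq·cos g) = −‖p·u + q·v‖²`. -/
theorem stmt8 (g p q : ℝ)
    (u v : EuclideanSpace ℝ (Fin 2))
    (hu0 : u 0 = 1) (hu1 : u 1 = 0)
    (hv0 : v 0 = Real.cos g) (hv1 : v 1 = Real.sin g)
    (R : EuclideanSpace ℝ (Fin 2) → EuclideanSpace ℝ (Fin 2))
    (hR : ∀ w : EuclideanSpace ℝ (Fin 2),
      (R w) 0 = Real.cos g * w 0 + Real.sin g * w 1 ∧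
      (R w) 1 = -Real.sin g * w 0 + Real.cos g * w 1) :
    R (p • u + q • v) = (q + 2 * p * Real.cos g) • u - p • v ∧
    p * (-p) - (q + 2 * p * Real.cos g) * q
      = -(p ^ 2 + q ^ 2 + 2 * p * q * Real.cos g) ∧
    -(p ^ 2 + q ^ 2 + 2 * p * q * Real.cos g) = -‖p • u + q • v‖ ^ 2 := by
  have pyth := Real.sin_sq_add_cos_sq g
  refine ⟨?_, by ring, ?_⟩
  · ext i
    fin_cases i
    · have h := (hR (p • u + q • v)).1
      simp only [PiLp.add_apply, PiLp.smul_apply, smul_eq_mul, hu0, hu1, hv0, hv1] at h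
      show R (p • u + q • v) 0 = ((q + 2 * p * Real.cos g) • u - p • v) 0
      simp only [PiLp.sub_apply, PiLp.smul_apply, smul_eq_mul, hu0, hv0, h]
      linear_combination q * pyth
    · have h := (hR (p • u + q • v)).2
      simp only [PiLp.add_apply, PiLp.smul_apply, smul_eq_mul, hu0, hu1, hv0, hv1] at h
      show R (p • u + q • v) 1 = ((q + 2 * p * Real.cos g) • u - p • v) 1
      simp only [PiLp.sub_apply, PiLp.smul_apply, smul_eq_mul, hu1, hv1, h]
      ring
  · have hn : ‖p • u + q • v‖ ^ 2 =
        ((p • u + q • v) 0) ^ 2 + ((p • u + q • v) 1) ^ 2 := by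
      rw [EuclideanSpace.norm_eq, Real.sq_sqrt (by positivity)]
      simp [Fin.sum_univ_two, sq_abs]
    rw [hn]
    simp only [PiLp.add_apply, PiLp.smul_apply, smul_eq_mul, hu0, hu1, hv0, hv1]
    linear_combination q^2 * pyth
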